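/- Let p be an odd prime and n ≥ 2, and suppose Φ₁ ⊆ M_n(𝔽_p) is a subspace with the property that there are subspaces Φ₂, Φ₃, Φ₄ ⊆ M_n(𝔽_p) satisfying [Φ_l, Φ_m] ⊆ Φ_{l+m} whenever l+m ≤ 4. If Φ₁ contains a diagonal matrix w = Σ aᵢe_{i,i} with a₁,…,aₙ pairwise distinct and contains e_{i,j} for all (i,j) with i+j odd, then Φ₄ contains sl_n(𝔽_p). -/

import Mathlib

open Matrix

/-- if subspaces `Φ₁, …, Φ₄ ⊆ M_n(𝔽_p)` satisfy `[Φ_l, Φ_m] ⊆ Φ_{l+m}` for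
`l + m ≤ 4`, and `Φ₁` contains a diagonal matrix with pairwise distinct entries as well as
all `e_{i,j}` with `i + j` odd, then `Φ₄` contains `sl_n(𝔽_p)`. -/
theorem stmt_11 (p : ℕ) [Fact p.Prime] (hp : Odd p) (n : ℕ) (hn : 2 ≤ n)
    (Φ : ℕ → Submodule (ZMod p) (Matrix (Fin n) (Fin n) (ZMod p)))
    (hbracket : ∀ l m : ℕ, 1 ≤ l → 1 ≤ m → l + m ≤ 4 →
      ∀ x ∈ Φ l, ∀ y ∈ Φ m, x * y - y * x ∈ Φ (l + m))
    (a : Fin n → ZMod p) (ha : Function.Injective a)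
    (hw : Matrix.diagonal a ∈ Φ 1)
    (he : ∀ i j : Fin n, Odd (i.val + j.val) → Matrix.single i j (1 : ZMod p) ∈ Φ 1) :
    ∀ X : Matrix (Fin n) (Fin n) (ZMod p), X.trace = 0 → X ∈ Φ 4 := by
  intro X hX
  set E : Fin n → Fin n → Matrix (Fin n) (Fin n) (ZMod p) :=
    fun i j => Matrix.single i j (1 : ZMod p) with hE
  have hane : ∀ i j : Fin n, i ≠ j → a i - a j ≠ 0 := fun i j h =>
    sub_ne_zero.mpr (fun hc => h (ha hc))
  have hcomm : ∀ i j : Fin n, Matrix.diagonal a * E i j - E i j * Matrix.diagonal a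
      = (a i - a j) • E i j := by
    intro i j
    ext i' j'
    simp only [hE, Matrix.sub_apply, Matrix.diagonal_mul, Matrix.mul_diagonal,
      Matrix.smul_apply, Matrix.single, Matrix.of_apply, smul_eq_mul]
    by_cases h1 : i = i' <;> by_cases h2 : j = j' <;> simp [h1, h2] <;> ring
  -- step lemma
  have hstep : ∀ k : ℕ, 1 ≤ k → k ≤ 3 → ∀ i j : Fin n, i ≠ j →
      E i j ∈ Φ k → E i j ∈ Φ (k + 1) := by
    intro k hk1 hk3 i j hij hm
    have hb := hbracket 1 k le_rfl hk1 (by omega) _ hw _ hm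
    rw [hcomm i j] at hb
    have := (Φ (1 + k)).smul_mem (a i - a j)⁻¹ hb
    rw [smul_smul, inv_mul_cancel₀ (hane i j hij), one_smul] at this
    rwa [add_comm] at this
  -- all off-diagonal E in Φ 2
  have h2 : ∀ i j : Fin n, i ≠ j → E i j ∈ Φ 2 := by
    intro i j hij
    rcases Nat.even_or_odd (i.val + j.val) with hev | hod
    · -- even: use a middle index
      have hij' : i.val ≠ j.val := fun hc => hij (Fin.ext hc)
      have h2i : i.val % 2 = j.val % 2 := by
        rcases Nat.even_iff.mp hev with h
        omega
      have hn3 : 3 ≤ n := by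
        have := i.isLt; have := j.isLt; omega
      set l : Fin n := if i.val % 2 = 0 then ⟨1, by omega⟩ else ⟨0, by omega⟩ with hl
      have hlv : l.val = if i.val % 2 = 0 then 1 else 0 := by
        rw [hl]; split <;> rfl
      have hodd1 : Odd (i.val + l.val) := by
        rw [Nat.odd_iff, hlv]; rcases Nat.even_iff.mp hev with h; split <;> omega
      have hodd2 : Odd (l.val + j.val) := by
        rw [Nat.odd_iff, hlv]; rcases Nat.even_iff.mp hev with h; split <;> omega
      have hb := hbracket 1 1 le_rfl le_rfl (by omega) _ (he i l hodd1) _ (he l j hodd2)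
      have hji : (j : Fin n) ≠ i := fun hc => hij hc.symm
      rw [Matrix.single_mul_single_same, Matrix.single_mul_single_of_ne (c := 1) l j i hji 1,
        sub_zero, one_mul] at hb
      exact hb
    · exact hstep 1 le_rfl (by omega) i j hij (he i j hod)
  have h4off : ∀ i j : Fin n, i ≠ j → E i j ∈ Φ 4 := fun i j hij =>
    hstep 3 (by omega) le_rfl i j hij (hstep 2 (by omega) (by omega) i j hij (h2 i j hij))
  have h4diag : ∀ i j : Fin n, i ≠ j → E i i - E j j ∈ Φ 4 := by
    intro i j hij
    have hb := hbracket 2 2 (by omega) (by omega) (by omega) _ (h2 i j hij) _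
      (h2 j i (fun hc => hij hc.symm))
    rw [Matrix.single_mul_single_same, Matrix.single_mul_single_same, one_mul] at hb
    exact hb
  -- decomposition
  have i0 : Fin n := ⟨0, by omega⟩
  have key : X = (∑ i : Fin n, ∑ j ∈ Finset.univ \ {i}, X i j • E i j)
      + ∑ i : Fin n, X i i • (E i i - E i0 i0) := by
    have h1 : ∀ i : Fin n, ∑ j ∈ Finset.univ \ {i}, X i j • E i j
        = (∑ j : Fin n, X i j • E i j) - X i i • E i i := by
      intro i
      rw [Finset.sum_sdiff_eq_sub (Finset.subset_univ _), Finset.sum_singleton]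
    have htr : (∑ i : Fin n, X i i) = 0 := hX
    have h3 : ∑ i : Fin n, X i i • (E i i - E i0 i0)
        = (∑ i : Fin n, X i i • E i i) - (∑ i : Fin n, X i i) • E i0 i0 := by
      simp only [smul_sub]
      rw [Finset.sum_sub_distrib, ← Finset.sum_smul]
    rw [h3, htr, zero_smul, sub_zero]
    calc X = ∑ i : Fin n, ∑ j : Fin n, X i j • E i j := by
            simpa only [hE, Matrix.smul_single, smul_eq_mul, mul_one] using
              Matrix.matrix_eq_sum_single X
      _ = (∑ i : Fin n, ∑ j ∈ Finset.univ \ {i}, X i j • E i j)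
            + ∑ i : Fin n, X i i • E i i := by
          rw [← Finset.sum_add_distrib]
          refine Finset.sum_congr rfl fun i _ => ?_
          rw [h1 i, sub_add_cancel]
  rw [key]
  refine (Φ 4).add_mem (Submodule.sum_mem _ fun i _ => Submodule.sum_mem _ fun j hj => ?_)
    (Submodule.sum_mem _ fun i _ => ?_)
  · have hij : i ≠ j := by
      intro h; subst h; simp at hj
    exact (Φ 4).smul_mem _ (h4off i j (fun hc => hij hc))
  · by_cases h : i = i0
    · subst h; simp
    · exact (Φ 4).smul_mem _ (h4diag i i0 h)
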